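/- Assume E[W] ≠ 0, E[W²] < ∞, and Var(W) > 0. Then for every t > 0, P(n · (μ̂_n/σ̂_n)² > t) → 1 as n → ∞. -/

import Mathlib

open MeasureTheory ProbabilityTheory Filter

/-- The Gaussian kernel `k(x, x') = exp(−‖x − x'‖₂²/σ₀)` on `ℝ^q`. -/
noncomputable def gaussKernel (σ₀ : ℝ) {q : ℕ} (x y : EuclideanSpace ℝ (Fin q)) : ℝ :=
  Real.exp (-‖x - y‖ ^ 2 / σ₀)

/-- **Theorem 3 of the paper.** Under a fixed alternative, where
`E[W] ≠ 0` for `W = Σ_j η_j ε k(X, x_j)`, with `E[W²] < ∞` and `Var(W) > 0`,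
for every `t > 0` we have `P(n (μ̂_n/σ̂_n)² > t) → 1` as `n → ∞`. -/
theorem svm_tstat_consistency_fixed_alternative
    {Ω : Type*} [MeasurableSpace Ω] (P : Measure Ω) [IsProbabilityMeasure P]
    (q J : ℕ) (x : Fin J → EuclideanSpace ℝ (Fin q)) (η : Fin J → ℝ)
    (σ₀ : ℝ) (hσ₀ : 0 < σ₀)
    (X : ℕ → Ω → EuclideanSpace ℝ (Fin q)) (ε : ℕ → Ω → ℝ)
    (hXmeas : ∀ i, Measurable (X i)) (hεmeas : ∀ i, Measurable (ε i))
    (hindep : iIndepFun (fun i ω => (X i ω, ε i ω)) P)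
    (hident : ∀ i, IdentDistrib (fun ω => (X i ω, ε i ω)) (fun ω => (X 0 ω, ε 0 ω)) P P)
    (W : ℕ → Ω → ℝ)
    (hW : ∀ i ω, W i ω = ∑ j : Fin J, η j * ε i ω * gaussKernel σ₀ (X i ω) (x j))
    (hmean : ∫ ω, W 0 ω ∂P ≠ 0)
    (hWL2 : MemLp (W 0) 2 P)
    (hvar : 0 < variance (W 0) P)
    (μhat σhat : ℕ → Ω → ℝ)
    (hμhat : ∀ n ω, μhat n ω = (n : ℝ)⁻¹ * ∑ i ∈ Finset.range n, W i ω)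
    (hσhat : ∀ n ω, σhat n ω =
      Real.sqrt (((n : ℝ) - 1)⁻¹ * ∑ i ∈ Finset.range n, (W i ω - μhat n ω) ^ 2)) :
    ∀ t : ℝ, 0 < t →
      Tendsto (fun n : ℕ => P {ω | t < (n : ℝ) * (μhat n ω / σhat n ω) ^ 2}) atTop
        (nhds 1) := by
  intro t ht
  classical
  set g : EuclideanSpace ℝ (Fin q) × ℝ → ℝ :=
    fun p => ∑ j : Fin J, η j * p.2 * gaussKernel σ₀ p.1 (x j) with hg
  have hgcont : Continuous g := by
    apply continuous_finset_sum; intro j _; unfold gaussKernel; fun_prop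
  have hWeq : W = fun i => g ∘ (fun ω => (X i ω, ε i ω)) := by
    funext i ω; simp [hg, hW i ω]
  have hWmeas : ∀ i, Measurable (W i) := by
    intro i; rw [hWeq]
    exact hgcont.measurable.comp ((hXmeas i).prodMk (hεmeas i))
  have hWindep : iIndepFun W P := by
    rw [hWeq]
    exact hindep.comp (fun _ => g) (fun _ => hgcont.measurable)
  have hWident : ∀ i, IdentDistrib (W i) (W 0) P P := by
    intro i; rw [hWeq]
    exact (hident i).comp hgcont.measurable
  -- SLLN for W
  have hWint : Integrable (W 0) P := hWL2.integrable one_le_two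
  have slln1 : ∀ᵐ ω ∂P, Tendsto (fun n : ℕ => (∑ i ∈ Finset.range n, W i ω) / n)
      atTop (nhds (∫ ω, W 0 ω ∂P)) :=
    strong_law_ae_real W hWint (fun i j hij => hWindep.indepFun hij) hWident
  -- SLLN for W²
  have hsqmeas : Measurable (fun y : ℝ => y ^ 2) := by fun_prop
  have hV2indep : iIndepFun (fun i ω => W i ω ^ 2) P :=
    hWindep.comp (fun _ => fun y : ℝ => y ^ 2) (fun _ => hsqmeas)
  have hV2ident : ∀ i, IdentDistrib (fun ω => W i ω ^ 2) (fun ω => W 0 ω ^ 2) P P :=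
    fun i => (hWident i).comp hsqmeas
  have hV2int : Integrable (fun ω => W 0 ω ^ 2) P := hWL2.integrable_sq
  have slln2 : ∀ᵐ ω ∂P, Tendsto (fun n : ℕ => (∑ i ∈ Finset.range n, W i ω ^ 2) / n)
      atTop (nhds (∫ ω, W 0 ω ^ 2 ∂P)) :=
    strong_law_ae_real (fun i ω => W i ω ^ 2) hV2int
      (fun i j hij => hV2indep.indepFun hij) hV2ident
  set μ : ℝ := ∫ ω, W 0 ω ∂P with hμdef
  set m2 : ℝ := ∫ ω, W 0 ω ^ 2 ∂P with hm2def
  have hvar_eq : variance (W 0) P = m2 - μ ^ 2 := by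
    rw [variance_eq_sub hWL2]
    simp [hμdef, hm2def, Pi.pow_apply]
  -- the fraction n/(n-1) tends to 1
  have hinv : Tendsto (fun n : ℕ => ((n : ℝ) - 1)⁻¹) atTop (nhds 0) := by
    apply tendsto_inv_atTop_zero.comp
    have := tendsto_atTop_add_const_right atTop (-1 : ℝ) tendsto_natCast_atTop_atTop
    simpa [sub_eq_add_neg] using this
  have hfrac : Tendsto (fun n : ℕ => (n : ℝ) / ((n : ℝ) - 1)) atTop (nhds 1) := by
    have h1 : Tendsto (fun n : ℕ => 1 + ((n : ℝ) - 1)⁻¹) atTop (nhds 1) := by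
      simpa using (tendsto_const_nhds (x := (1 : ℝ)) (f := atTop)).add hinv
    apply Tendsto.congr' _ h1
    filter_upwards [eventually_ge_atTop 2] with n hn
    have hn1 : ((n : ℝ) - 1) ≠ 0 := by
      have : (2 : ℝ) ≤ (n : ℝ) := by exact_mod_cast hn
      nlinarith
    field_simp
    ring
  -- a.e. eventual divergence
  have key : ∀ᵐ ω ∂P, ∀ᶠ n : ℕ in atTop, t < (n : ℝ) * (μhat n ω / σhat n ω) ^ 2 := by
    filter_upwards [slln1, slln2] with ω h1 h2
    have hμt : Tendsto (fun n : ℕ => μhat n ω) atTop (nhds μ) := by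
      apply Tendsto.congr _ h1
      intro n; rw [hμhat, inv_mul_eq_div]
    have hq : Tendsto (fun n : ℕ =>
        (n : ℝ) / ((n : ℝ) - 1) * ((∑ i ∈ Finset.range n, W i ω ^ 2) / n - μhat n ω ^ 2))
        atTop (nhds (variance (W 0) P)) := by
      have := hfrac.mul (h2.sub (hμt.pow 2))
      rw [one_mul, ← hvar_eq] at this
      exact this
    have hc : Tendsto (fun n : ℕ =>
        ((n : ℝ) - 1)⁻¹ * ∑ i ∈ Finset.range n, (W i ω - μhat n ω) ^ 2)
        atTop (nhds (variance (W 0) P)) := by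
      apply Tendsto.congr' _ hq
      filter_upwards [eventually_ge_atTop 2] with n hn
      have h2n : (2 : ℝ) ≤ (n : ℝ) := by exact_mod_cast hn
      have hn0 : (n : ℝ) ≠ 0 := by nlinarith
      have hn1 : ((n : ℝ) - 1) ≠ 0 := by nlinarith
      have hS : ∑ i ∈ Finset.range n, W i ω = (n : ℝ) * μhat n ω := by
        rw [hμhat]; field_simp
      have expand : ∑ i ∈ Finset.range n, (W i ω - μhat n ω) ^ 2
          = (∑ i ∈ Finset.range n, W i ω ^ 2) - (n : ℝ) * μhat n ω ^ 2 := by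
        have : ∀ i ∈ Finset.range n, (W i ω - μhat n ω) ^ 2
            = W i ω ^ 2 - 2 * μhat n ω * W i ω + μhat n ω ^ 2 := by
          intro i _; ring
        rw [Finset.sum_congr rfl this, Finset.sum_add_distrib, Finset.sum_sub_distrib,
          ← Finset.mul_sum, hS, Finset.sum_const, Finset.card_range, nsmul_eq_mul]
        ring
      rw [expand]
      field_simp
    have hσt : Tendsto (fun n : ℕ => σhat n ω) atTop
        (nhds (Real.sqrt (variance (W 0) P))) := by
      have := (Real.continuous_sqrt.tendsto _).comp hc
      apply Tendsto.congr _ this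
      intro n; rw [hσhat]; rfl
    have hsqrtne : Real.sqrt (variance (W 0) P) ≠ 0 :=
      ne_of_gt (Real.sqrt_pos.2 hvar)
    have hratio : Tendsto (fun n : ℕ => (μhat n ω / σhat n ω) ^ 2) atTop
        (nhds ((μ / Real.sqrt (variance (W 0) P)) ^ 2)) :=
      (hμt.div hσt hsqrtne).pow 2
    have hpos : 0 < (μ / Real.sqrt (variance (W 0) P)) ^ 2 :=
      pow_two_pos_of_ne_zero (div_ne_zero hmean hsqrtne)
    have hdiv : Tendsto (fun n : ℕ => (n : ℝ) * (μhat n ω / σhat n ω) ^ 2) atTop atTop :=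
      Tendsto.atTop_mul_pos hpos tendsto_natCast_atTop_atTop hratio
    exact hdiv.eventually_gt_atTop t
  -- from a.e. eventual membership to convergence of probabilities
  set A : ℕ → Set Ω := fun n => {ω | t < (n : ℝ) * (μhat n ω / σhat n ω) ^ 2} with hA
  set D : ℕ → Set Ω := fun n => ⋂ m ∈ Set.Ici n, A m with hD
  have hDmono : Monotone D := fun a b hab =>
    Set.biInter_subset_biInter_left (Set.Ici_subset_Ici.2 hab)
  have hDsub : ∀ n, D n ⊆ A n := fun n => Set.biInter_subset_of_mem (Set.mem_Ici.2 le_rfl)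
  have hUnion : P (⋃ n, D n) = 1 := by
    have hsub : ∀ᵐ ω ∂P, ω ∈ ⋃ n, D n := by
      filter_upwards [key] with ω hω
      rcases eventually_atTop.1 hω with ⟨N, hN⟩
      exact Set.mem_iUnion.2 ⟨N, Set.mem_biInter fun m hm => hN m hm⟩
    have heq : (⋃ n, D n) =ᵐ[P] (Set.univ : Set Ω) := by
      rw [Filter.eventuallyEq_set]
      filter_upwards [hsub] with ω h
      simp [h]
    rw [measure_congr heq, measure_univ]
  have hDtend : Tendsto (fun n => P (D n)) atTop (nhds 1) := by
    have := tendsto_measure_iUnion_atTop (μ := P) hDmono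
    rw [hUnion] at this
    exact this
  refine tendsto_of_tendsto_of_tendsto_of_le_of_le hDtend tendsto_const_nhds ?_ ?_
  · exact fun n => measure_mono (hDsub n)
  · exact fun n => prob_le_one
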